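/- If C is a geometrically griddable permutation class and U is a partially well-ordered permutation class, then the class C[U] is partially well-ordered. -/

import Mathlib

open scoped BigOperators

/-- A permutation of length `n`, in the combinatorial sense. -/
abbrev PermOf (n : ℕ) : Type := Equiv.Perm (Fin n)

/-- Pattern containment between permutations of possibly different lengths. -/
def PattContains {k n : ℕ} (σ : PermOf k) (π : PermOf n) : Prop :=
  ∃ f : Fin k ↪o Fin n, ∀ s t : Fin k, σ s < σ t ↔ π (f s) < π (f t)

/-- A permutation of arbitrary finite length. -/
abbrev Permutation : Type := Σ n : ℕ, PermOf n

/-- The containment order on permutations. -/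
def PermLe (σ π : Permutation) : Prop := PattContains σ.2 π.2

/-- A permutation class: a set of permutations closed downwards under containment. -/
def IsPermClass (C : Set Permutation) : Prop :=
  ∀ σ π : Permutation, PermLe σ π → π ∈ C → σ ∈ C

/-- The generating function of a set of permutations. -/
noncomputable def gfOf (C : Set Permutation) : PowerSeries ℚ :=
  PowerSeries.mk fun n => ({π : PermOf n | (⟨n, π⟩ : Permutation) ∈ C}.ncard : ℚ)

/-- A formal power series is rational if it satisfies `q * f = p` for polynomials `p, q`, `q ≠ 0`. -/
def IsRationalPS (f : PowerSeries ℚ) : Prop :=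
  ∃ p q : Polynomial ℚ, q ≠ 0 ∧
    (Polynomial.coeToPowerSeries.ringHom q) * f = Polynomial.coeToPowerSeries.ringHom p

/-- A formal power series is algebraic if `P(x, f) = 0` for a nonzero polynomial `P` in two
variables over `ℚ` (viewed as a polynomial in the second variable with polynomial coefficients). -/
def IsAlgebraicPS (f : PowerSeries ℚ) : Prop :=
  ∃ P : Polynomial (Polynomial ℚ), P ≠ 0 ∧
    Polynomial.eval₂ Polynomial.coeToPowerSeries.ringHom f P = 0

/-- A set of permutations is partially well-ordered if it contains no infinite antichain. -/
def IsPwoClass (C : Set Permutation) : Prop :=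
  ∀ A : Set Permutation, A ⊆ C →
    (∀ x ∈ A, ∀ y ∈ A, x ≠ y → ¬ PermLe x y) → A.Finite

/-- The basis of a class: the minimal permutations not in it. -/
def basisOf (C : Set Permutation) : Set Permutation :=
  {π | π ∉ C ∧ ∀ σ, PermLe σ π → σ ≠ π → σ ∈ C}

def FinitelyBased (C : Set Permutation) : Prop := (basisOf C).Finite

/-- The order-preserving equivalence between a lexicographic sigma of `Fin`s and `Fin` of the sum,
sending `⟨i, j⟩` to `n 0 + ⋯ + n (i-1) + j`. -/
def sigmaFinFstEquiv {m : ℕ} (β : Fin (m + 1) → Type*) :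
    (Σ i : Fin (m + 1), β i) ≃ (β 0 ⊕ Σ i : Fin m, β i.succ) where
  toFun x := Fin.cases (motive := fun i => β i → β 0 ⊕ Σ i : Fin m, β i.succ)
    Sum.inl (fun i j => Sum.inr ⟨i, j⟩) x.1 x.2
  invFun s := Sum.elim (fun j => ⟨0, j⟩) (fun p => ⟨p.1.succ, p.2⟩) s
  left_inv := by
    rintro ⟨i, j⟩
    induction i using Fin.cases <;> simp
  right_inv := by
    rintro (j | ⟨i, j⟩) <;> simp

def sigmaFinEquiv : ∀ {m : ℕ} {n : Fin m → ℕ}, (Σ i : Fin m, Fin (n i)) ≃ Fin (∑ i, n i)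
  | 0, n =>
    { toFun := fun x => x.1.elim0
      invFun := fun p => (Fin.cast (by simp) p : Fin 0).elim0
      left_inv := fun x => x.1.elim0
      right_inv := fun p => (Fin.cast (by simp) p : Fin 0).elim0 }
  | m + 1, n =>
    (sigmaFinFstEquiv fun i => Fin (n i)).trans <|
      ((Equiv.refl (Fin (n 0))).sumCongr sigmaFinEquiv).trans <|
        finSumFinEquiv.trans (finCongr (Fin.sum_univ_succ n).symm)

/-- The inflation `σ[α 0, …, α (m-1)]` of `σ` by the permutations `α i`. -/
noncomputable def inflation {m : ℕ} (σ : PermOf m) {n : Fin m → ℕ}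
    (α : ∀ i, PermOf (n i)) : PermOf (∑ i, n i) :=
  sigmaFinEquiv.symm.trans <|
    (Equiv.sigmaCongrRight fun i =>
        (α i).trans (finCongr (congrArg n (σ.symm_apply_apply i).symm))).trans <|
      (Equiv.sigmaCongrLeft (β := fun v : Fin m => Fin (n (σ.symm v))) σ).trans <|
        sigmaFinEquiv.trans (finCongr (Equiv.sum_comp σ.symm n))

/-- The direct sum `x ⊕ y` of two permutations. -/
def dsum {a b : ℕ} (x : PermOf a) (y : PermOf b) : PermOf (a + b) :=
  finSumFinEquiv.symm.trans ((Equiv.sumCongr x y).trans finSumFinEquiv)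

/-- The skew sum `x ⊖ y` of two permutations. -/
def ssum {a b : ℕ} (x : PermOf a) (y : PermOf b) : PermOf (a + b) :=
  finSumFinEquiv.symm.trans <| (Equiv.sumCongr x y).trans <|
    (Equiv.sumComm (Fin a) (Fin b)).trans <| finSumFinEquiv.trans (finCongr (Nat.add_comm b a))

def onePerm : Permutation := ⟨1, Equiv.refl _⟩

def perm12 : PermOf 2 := Equiv.refl _

def perm21 : PermOf 2 := Equiv.swap 0 1

/-- Sums and skew sums at the level of `Permutation`. -/
def psum (x y : Permutation) : Permutation := ⟨x.1 + y.1, dsum x.2 y.2⟩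

def pskew (x y : Permutation) : Permutation := ⟨x.1 + y.1, ssum x.2 y.2⟩

/-- Two permutations (of possibly different declared lengths) are the same pattern. -/
def SamePatt {a b : ℕ} (x : PermOf a) (y : PermOf b) : Prop :=
  PattContains x y ∧ PattContains y x

/-- The pattern (subpermutation) of `π` on a set `s` of positions. -/
noncomputable def pattOn {N : ℕ} (π : PermOf N) (s : Finset (Fin N)) : PermOf s.card :=
  (Tuple.sort fun p : Fin s.card => π ((s.orderIsoOfFin rfl p : Fin N))).symm

def SumDecomposable (π : Permutation) : Prop :=
  ∃ x y : Permutation, 0 < x.1 ∧ 0 < y.1 ∧ π = psum x y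

def SkewDecomposable (π : Permutation) : Prop :=
  ∃ x y : Permutation, 0 < x.1 ∧ 0 < y.1 ∧ π = pskew x y

/-- The property (set) of sum decomposable permutations. -/
def DSumSet : Set Permutation := {π | SumDecomposable π}

/-- The property (set) of skew decomposable permutations. -/
def DSkewSet : Set Permutation := {π | SkewDecomposable π}

/-- `t` is a sum splitting point of `x`: positions `≥ t` carry exactly the values `≥ t`. -/
def SumSplitAt {a : ℕ} (x : PermOf a) (t : ℕ) : Prop :=
  ∀ p : Fin a, t ≤ (p : ℕ) ↔ t ≤ (x p : ℕ)

/-- `t` is a skew splitting point of `x`: positions `< t` carry exactly the values `≥ a - t`. -/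
def SkewSplitAt {a : ℕ} (x : PermOf a) (t : ℕ) : Prop :=
  ∀ p : Fin a, (p : ℕ) < t ↔ a - t ≤ (x p : ℕ)

/-- `γ` is a sum-suffix of `x`. -/
def IsSumSuffixOf {b a : ℕ} (γ : PermOf b) (x : PermOf a) : Prop :=
  ∃ t, SumSplitAt x t ∧ SamePatt γ (pattOn x (Finset.univ.filter fun p => t ≤ (p : ℕ)))

def IsSumPrefixOf {b a : ℕ} (γ : PermOf b) (x : PermOf a) : Prop :=
  ∃ t, SumSplitAt x t ∧ SamePatt γ (pattOn x (Finset.univ.filter fun p => (p : ℕ) < t))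

def IsSkewSuffixOf {b a : ℕ} (γ : PermOf b) (x : PermOf a) : Prop :=
  ∃ t, SkewSplitAt x t ∧ SamePatt γ (pattOn x (Finset.univ.filter fun p => t ≤ (p : ℕ)))

def IsSkewPrefixOf {b a : ℕ} (γ : PermOf b) (x : PermOf a) : Prop :=
  ∃ t, SkewSplitAt x t ∧ SamePatt γ (pattOn x (Finset.univ.filter fun p => (p : ℕ) < t))

/-- Length of the first sum component. -/
noncomputable def fscLen {a : ℕ} (x : PermOf a) : ℕ := sInf {t | 1 ≤ t ∧ SumSplitAt x t}

noncomputable def firstSumComp {a : ℕ} (x : PermOf a) : Permutation :=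
  ⟨_, pattOn x (Finset.univ.filter fun p => (p : ℕ) < fscLen x)⟩

noncomputable def fskLen {a : ℕ} (x : PermOf a) : ℕ := sInf {t | 1 ≤ t ∧ SkewSplitAt x t}

noncomputable def firstSkewComp {a : ℕ} (x : PermOf a) : Permutation :=
  ⟨_, pattOn x (Finset.univ.filter fun p => (p : ℕ) < fskLen x)⟩

open Classical in
/-- The first component of a permutation. -/
noncomputable def firstComp (π : Permutation) : Permutation :=
  if π ∈ DSumSet then firstSumComp π.2
  else if π ∈ DSkewSet then firstSkewComp π.2
  else π

/-- The inflation `C[U]` of one set of permutations by another. -/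
def classInflate (C U : Set Permutation) : Set Permutation :=
  {π | ∃ (m : ℕ) (σ : PermOf m) (n : Fin m → ℕ) (α : ∀ i, PermOf (n i)),
      (⟨m, σ⟩ : Permutation) ∈ C ∧ (∀ i, 0 < n i) ∧
      (∀ i, (⟨n i, α i⟩ : Permutation) ∈ U) ∧ π = ⟨∑ i, n i, inflation σ α⟩}

/-- A class is substitution closed if `C[C] ⊆ C`. -/
def SubstClosed (C : Set Permutation) : Prop := classInflate C C ⊆ C

/-- The substitution closure: the smallest substitution closed class containing `C`. -/
def substClosure (C : Set Permutation) : Set Permutation :=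
  ⋂₀ {D | IsPermClass D ∧ SubstClosed D ∧ C ⊆ D}

/-- Iterated inflations: `C^[0] = {1}` and `C^[i+1] = C[C^[i]]`. -/
def iterInflate (C : Set Permutation) : ℕ → Set Permutation
  | 0 => {onePerm}
  | i + 1 => classInflate C (iterInflate C i)

/-- The class of one-point extensions of members of `C`. -/
def onePointExt (C : Set Permutation) : Set Permutation :=
  {π | ∃ σ : Permutation, σ ∈ C ∧ σ.1 + 1 = π.1 ∧ PermLe σ π}

/-- A set of indices is contiguous. -/
def IsIntervalSet {n : ℕ} (s : Set (Fin n)) : Prop :=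
  ∀ ⦃x⦄, x ∈ s → ∀ ⦃y⦄, y ∈ s → ∀ ⦃z⦄, x ≤ z → z ≤ y → z ∈ s

/-- `s` is an interval of the permutation `π`: both `s` and its image are contiguous. -/
def IsPermInterval {n : ℕ} (π : PermOf n) (s : Set (Fin n)) : Prop :=
  IsIntervalSet s ∧ IsIntervalSet (π '' s)

/-- A permutation is simple if it has length at least 2 and only trivial intervals. -/
def IsSimple {n : ℕ} (π : PermOf n) : Prop :=
  2 ≤ n ∧ ∀ s : Set (Fin n), IsPermInterval π s → s.ncard ≤ 1 ∨ s = Set.univ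

/-- The standard figure of a 0/±1 matrix (entries indexed (column, row), zero-based). -/
def stdFigure {t u : ℕ} (M : Fin t → Fin u → ℤ) : Set (ℝ × ℝ) :=
  {p | ∃ (k : Fin t) (l : Fin u) (s : ℝ), 0 ≤ s ∧ s ≤ 1 ∧
    ((M k l = 1 ∧ p = ((k : ℝ) + s, (l : ℝ) + s)) ∨
     (M k l = -1 ∧ p = ((k : ℝ) + s, (l : ℝ) + 1 - s)))}

/-- The geometric grid class of a 0/±1 matrix. -/
def geomGridClass {t u : ℕ} (M : Fin t → Fin u → ℤ) : Set Permutation :=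
  {π | ∃ p : Fin π.1 → ℝ × ℝ, (∀ i, p i ∈ stdFigure M) ∧
    (∀ i j : Fin π.1, i < j → (p i).1 < (p j).1) ∧
    (∀ i j : Fin π.1, π.2 i < π.2 j ↔ (p i).2 < (p j).2)}

/-- A set of permutations is geometrically griddable if it lies in some geometric grid class. -/
def GeomGriddable (C : Set Permutation) : Prop :=
  ∃ (t u : ℕ) (M : Fin t → Fin u → ℤ),
    (∀ k l, M k l = 0 ∨ M k l = 1 ∨ M k l = -1) ∧ C ⊆ geomGridClass M

/-- A class is strongly rational if it and all of its subclasses have rational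
generating functions. -/
def StronglyRational (C : Set Permutation) : Prop :=
  IsRationalPS (gfOf C) ∧ ∀ D, D ⊆ C → IsPermClass D → IsRationalPS (gfOf D)

/-- The interval of indices `[lo, hi)` inside `Fin m`, as a finset. -/
def idxIval (m lo hi : ℕ) : Finset (Fin m) :=
  Finset.univ.filter fun i => lo ≤ (i : ℕ) ∧ (i : ℕ) < hi

/-- `θ[γ]` is a `U`-decomposition of `π`. -/
def IsUDecompOf (U : Set Permutation) (π : Permutation) {m : ℕ} (θ : PermOf m)
    (n : Fin m → ℕ) (γ : ∀ i, PermOf (n i)) : Prop :=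
  (∀ i, 0 < n i) ∧ (∀ i, (⟨n i, γ i⟩ : Permutation) ∈ U) ∧ π = ⟨∑ i, n i, inflation θ γ⟩

def HasUDecompSkel (U : Set Permutation) (π θ : Permutation) : Prop :=
  ∃ n γ, IsUDecompOf U π θ.2 n γ

/-- `θ` is the `U`-profile of `π`: the containment-minimal skeleton of a `U`-decomposition. -/
def IsUProfile (U : Set Permutation) (π θ : Permutation) : Prop :=
  HasUDecompSkel U π θ ∧ ∀ θ', HasUDecompSkel U π θ' → PermLe θ θ'

/-- `θ[γ]` is the left-greedy `U`-decomposition of `π`: the skeleton is the `U`-profile and the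
sequence of block lengths is lexicographically maximal. -/
def IsLeftGreedy (U : Set Permutation) (π : Permutation) {m : ℕ} (θ : PermOf m)
    (n : Fin m → ℕ) (γ : ∀ i, PermOf (n i)) : Prop :=
  IsUDecompOf U π θ n γ ∧ IsUProfile U π ⟨m, θ⟩ ∧
    ∀ (n' : Fin m → ℕ) (γ' : ∀ i, PermOf (n' i)), IsUDecompOf U π θ n' γ' → n' ≠ n →
      ∃ i : Fin m, (∀ i' : Fin m, i' < i → n' i' = n i') ∧ n' i < n i

/-- A property is a set of permutations. -/
abbrev PProperty : Type := Set Permutation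

/-- The collection of properties of `P` satisfied by `π`. -/
def propsOf (P : Set PProperty) (π : Permutation) : Set PProperty := {S | S ∈ P ∧ π ∈ S}

/-- A framework: a skeleton together with a set of properties for each position. -/
abbrev Framework : Type := Σ m : ℕ, PermOf m × (Fin m → Set PProperty)

/-- The framework `F` describes `π`. -/
def FwDescribes (P : Set PProperty) (F : Framework) (π : Permutation) : Prop :=
  ∃ (n : Fin F.1 → ℕ) (α : ∀ i, PermOf (n i)), (∀ i, 0 < n i) ∧
    π = ⟨∑ i, n i, inflation F.2.1 α⟩ ∧ ∀ i, propsOf P ⟨n i, α i⟩ = F.2.2 i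

def FwNonempty (P : Set PProperty) (F : Framework) : Prop := ∃ π, FwDescribes P F π

/-- A simple framework: simple skeleton, with the extra condition for skeletons `12`, `21`. -/
def IsSimpleFw (F : Framework) : Prop :=
  IsSimple F.2.1 ∧
  ∀ i : Fin F.1, (i : ℕ) = 0 →
    (SamePatt F.2.1 perm12 → DSumSet ∉ F.2.2 i) ∧
    (SamePatt F.2.1 perm21 → DSkewSet ∉ F.2.2 i)

/-- A family of properties is query-complete. -/
def QueryComplete (P : Set PProperty) : Prop :=
  ∀ (m : ℕ) (σ : PermOf m) (n n' : Fin m → ℕ)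
    (α : ∀ i, PermOf (n i)) (α' : ∀ i, PermOf (n' i)),
    (∀ i, 0 < n i) → (∀ i, 0 < n' i) →
    (∀ i, propsOf P ⟨n i, α i⟩ = propsOf P ⟨n' i, α' i⟩) →
    propsOf P (⟨∑ i, n i, inflation σ α⟩ : Permutation)
      = propsOf P (⟨∑ i, n' i, inflation σ α'⟩ : Permutation)

/-- The avoidance property `Av(δ)`. -/
def AvSet (δ : Permutation) : Set Permutation := {π | ¬ PermLe δ π}

/-- The first component avoidance property `Av^{#1}(δ)`. -/
def AvFCSet (δ : Permutation) : Set Permutation := {π | ¬ PermLe δ (firstComp π)}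

/-- The family of properties `P_B`. -/
def PB (B : Set Permutation) : Set PProperty :=
  {DSumSet, DSkewSet} ∪ {S | ∃ δ, (∃ β ∈ B, PermLe δ β) ∧ S = AvSet δ}

/-- The family of properties `P̃_B`. -/
def PBt (B : Set Permutation) : Set PProperty :=
  PB B ∪ {S | ∃ δ, (∃ β ∈ B, PermLe δ β) ∧ S = AvFCSet δ}

/-- A partial multiplication matrix. -/
def IsPMM {t u : ℕ} (M : Fin t → Fin u → ℤ) : Prop :=
  ∃ (c : Fin t → ℤ) (r : Fin u → ℤ),
    (∀ k, c k = 1 ∨ c k = -1) ∧ (∀ l, r l = 1 ∨ r l = -1) ∧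
    ∀ k l, M k l = c k * r l ∨ M k l = 0

/-- The matrix `M^{×2}`: each line segment of the standard figure is subdivided in two. -/
def mTimes2 {t u : ℕ} (M : Fin t → Fin u → ℤ) : Fin (2 * t) → Fin (2 * u) → ℤ :=
  fun k l =>
    if M ⟨(k : ℕ) / 2, by have := k.isLt; omega⟩ ⟨(l : ℕ) / 2, by have := l.isLt; omega⟩ = 1
        ∧ (k : ℕ) % 2 = (l : ℕ) % 2 then 1
    else if M ⟨(k : ℕ) / 2, by have := k.isLt; omega⟩ ⟨(l : ℕ) / 2, by have := l.isLt; omega⟩ = -1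
        ∧ (k : ℕ) % 2 ≠ (l : ℕ) % 2 then -1
    else 0

/-- A regular language: one accepted by a DFA with finitely many states. -/
def IsRegularLang {A : Type _} (L : Set (List A)) : Prop :=
  ∃ (S : Type) (_ : Fintype S) (M : DFA A S), M.accepts = L

/-- The cell alphabet of a matrix: the nonzero cells. -/
def CellAlph {t u : ℕ} (M : Fin t → Fin u → ℤ) : Type := {kl : Fin t × Fin u // M kl.1 kl.2 ≠ 0}

/-- The point of the standard figure corresponding to the `i`-th letter of a word of cells,
relative to column signs `c` and row signs `r`. -/
noncomputable def pointOfLetter {t u : ℕ} (c : Fin t → ℤ) (r : Fin u → ℤ) (n : ℕ)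
    (w : Fin n → Fin t × Fin u) (i : Fin n) : ℝ × ℝ :=
  (if c (w i).1 = 1 then ((w i).1 : ℝ) + (((i : ℕ) + 1) / (n + 1) : ℝ)
     else ((w i).1 : ℝ) + 1 - (((i : ℕ) + 1) / (n + 1) : ℝ),
   if r (w i).2 = 1 then ((w i).2 : ℝ) + (((i : ℕ) + 1) / (n + 1) : ℝ)
     else ((w i).2 : ℝ) + 1 - (((i : ℕ) + 1) / (n + 1) : ℝ))

/-- The permutation determined by a family of points in the plane with pairwise distinct
coordinates: sort by `x`, rank by `y`. -/
noncomputable def permOfPoints {n : ℕ} (p : Fin n → ℝ × ℝ) : PermOf n :=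
  (Tuple.sort fun i => (p i).1).trans (Tuple.sort fun i => (p i).2).symm

/-- The map `φ^P` from words over `Σ × 2^P` to frameworks, built from the encoding `φ` and the
index correspondence `ψ`. -/
noncomputable def fwOfWord {A : Type _} {t u : ℕ} (c : Fin t → ℤ) (r : Fin u → ℤ)
    (cell : A → Fin t × Fin u) (qs : A → Set PProperty) (v : List A) : Framework :=
  ⟨v.length,
    (permOfPoints (pointOfLetter c r v.length fun j => cell (v.get j)),
     fun i => qs (v.get ((Tuple.sort fun j =>
        (pointOfLetter c r v.length (fun j' => cell (v.get j')) j).1) i)))⟩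

/-- The number of permutations of length `n` in `C`. -/
noncomputable def countLen (C : Set Permutation) (n : ℕ) : ℕ :=
  {π : PermOf n | (⟨n, π⟩ : Permutation) ∈ C}.ncard


section AuxBasic

lemma permLe_refl (x : Permutation) : PermLe x x :=
  ⟨(OrderIso.refl (Fin x.1)).toOrderEmbedding, fun _ _ => Iff.rfl⟩

lemma permLe_trans {x y z : Permutation} (h1 : PermLe x y) (h2 : PermLe y z) : PermLe x z := by
  obtain ⟨f, hf⟩ := h1
  obtain ⟨g, hg⟩ := h2
  exact ⟨f.trans g, fun s t => (hf s t).trans (hg (f s) (f t))⟩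

lemma permLe_len {x y : Permutation} (h : PermLe x y) : x.1 ≤ y.1 := by
  obtain ⟨f, -⟩ := h
  simpa using Fintype.card_le_of_injective f f.injective

lemma fin_strictMono_eq_id {n : ℕ} {f : Fin n → Fin n} (hf : StrictMono f) : f = id := by
  have hsurj : Function.Surjective f := Finite.injective_iff_surjective.1 hf.injective
  have h2 : ⇑(StrictMono.orderIsoOfSurjective f hf hsurj) = f :=
    StrictMono.coe_orderIsoOfSurjective f hf hsurj
  rw [Subsingleton.elim (StrictMono.orderIsoOfSurjective f hf hsurj) (OrderIso.refl (Fin n))]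
    at h2
  simpa using h2.symm

lemma permLe_eq_of_len_eq {x y : Permutation} (hlen : x.1 = y.1) (h : PermLe x y) : x = y := by
  obtain ⟨n, σ⟩ := x
  obtain ⟨n', π⟩ := y
  obtain rfl : n = n' := hlen
  obtain ⟨f, hf⟩ := h
  have hfid : (f : Fin n → Fin n) = id := fin_strictMono_eq_id f.strictMono
  simp only [Sigma.mk.inj_iff, heq_eq_eq, true_and]
  have hiff : ∀ s t, σ s < σ t ↔ π s < π t := by
    intro s t
    have := hf s t
    rwa [show f s = s from congrFun hfid s, show f t = t from congrFun hfid t] at this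
  have hmono : StrictMono (π ∘ σ.symm) := by
    intro a b hab
    simpa using (hiff (σ.symm a) (σ.symm b)).1 (by simpa using hab)
  have := fin_strictMono_eq_id hmono
  ext x
  have h2 := congrFun this (σ x)
  simp only [Function.comp_apply, Equiv.symm_apply_apply, id_eq] at h2
  exact congrArg Fin.val h2.symm

/-- A pwo class is `PartiallyWellOrderedOn` for `PermLe`. -/
lemma isPwoClass_pwo {U : Set Permutation} (hU : IsPwoClass U) :
    U.PartiallyWellOrderedOn PermLe := by
  rw [Set.partiallyWellOrderedOn_iff_exists_lt]
  intro f hf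
  by_contra hbad
  push_neg at hbad
  have hinj : Function.Injective f := by
    intro a b hab
    by_contra hne
    rcases lt_or_gt_of_ne hne with h | h
    · exact hbad a b h (hab ▸ permLe_refl _)
    · exact hbad b a h (hab ▸ permLe_refl _)
  by_cases hcase : ∃ ℓ, {i : ℕ | (f i).1 = ℓ}.Infinite
  · obtain ⟨ℓ, hℓ⟩ := hcase
    have hfin := hU (f '' {i | (f i).1 = ℓ}) (by rintro x ⟨i, -, rfl⟩; exact hf i)
      (by
        rintro x ⟨a, ha, rfl⟩ y ⟨b, hb, rfl⟩ hne hle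
        have hab : a ≠ b := fun h => hne (h ▸ rfl)
        rcases lt_or_gt_of_ne hab with h | h
        · exact hbad a b h hle
        · exact hne (permLe_eq_of_len_eq (ha.trans hb.symm) hle))
    exact (hℓ.image (hinj.injOn)) hfin
  · push_neg at hcase
    have step : ∀ m : ℕ, ∃ N, m < N ∧ (f m).1 < (f N).1 := by
      intro m
      have hfin : {i : ℕ | (f i).1 ≤ (f m).1}.Finite := by
        refine Set.Finite.subset (Set.Finite.biUnion (Set.finite_Iic ((f m).1))
          (fun ℓ _ => hcase ℓ)) ?_
        intro i hi
        exact Set.mem_biUnion (by exact hi) rfl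
      have hfin2 : ({i : ℕ | i ≤ m} ∪ {i | (f i).1 ≤ (f m).1}).Finite :=
        (Set.finite_le_nat m).union hfin
      obtain ⟨N, hN⟩ := hfin2.infinite_compl.nonempty
      simp only [Set.mem_compl_iff, Set.mem_union, Set.mem_setOf_eq, not_or, not_le] at hN
      exact ⟨N, hN.1, hN.2⟩
    choose F hF1 hF2 using step
    set h : ℕ → ℕ := fun n => F^[n] 0 with hdef
    have hstep : ∀ n, h (n + 1) = F (h n) := by
      intro n; simp [hdef, Function.iterate_succ_apply']
    have hmono : StrictMono h :=
      strictMono_nat_of_lt_succ (fun n => by rw [hstep]; exact hF1 _)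
    have hlen : StrictMono fun n => (f (h n)).1 :=
      strictMono_nat_of_lt_succ (fun n => by rw [hstep]; exact hF2 _)
    have hfin := hU (f '' Set.range h) (by rintro x ⟨i, -, rfl⟩; exact hf i)
      (by
        rintro x ⟨a', ⟨a, rfl⟩, rfl⟩ y ⟨b', ⟨b, rfl⟩, rfl⟩ hne hle
        have hab : a ≠ b := fun hh => hne (hh ▸ rfl)
        rcases lt_or_gt_of_ne hab with hlt | hlt
        · exact hbad _ _ (hmono hlt) hle
        · exact absurd (permLe_len hle) (not_le.2 (hlen hlt)))
    exact ((Set.infinite_range_of_injective hmono.injective).image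
      (hinj.injOn)) hfin

end AuxBasic

section AuxSigma

/-- Partial sum of block lengths before index `i`. -/
def blkSum {m : ℕ} (n : Fin m → ℕ) (i : Fin m) : ℕ :=
  ∑ j ∈ Finset.univ.filter (fun j => j < i), n j

lemma blkSum_zero {m : ℕ} (n : Fin (m + 1) → ℕ) : blkSum n 0 = 0 := by
  simp [blkSum, Finset.filter_eq_empty_iff.2 (fun j _ => Fin.not_lt_zero j)]

lemma blkSum_succ {m : ℕ} (n : Fin (m + 1) → ℕ) (i : Fin m) :
    blkSum n i.succ = n 0 + blkSum (fun q => n q.succ) i := by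
  unfold blkSum
  rw [Finset.sum_filter, Finset.sum_filter, Fin.sum_univ_succ]
  simp [Fin.succ_pos, Fin.succ_lt_succ_iff]

lemma blkSum_add_le {m : ℕ} (n : Fin m → ℕ) {i i' : Fin m} (h : i < i') :
    blkSum n i + n i ≤ blkSum n i' := by
  have hins : insert i (Finset.univ.filter (fun j => j < i)) ⊆
      Finset.univ.filter (fun j => j < i') := by
    intro j hj
    rcases Finset.mem_insert.1 hj with rfl | hj
    · simp [h]
    · simp only [Finset.mem_filter, Finset.mem_univ, true_and] at hj ⊢
      exact hj.trans h
  have hnot : i ∉ Finset.univ.filter (fun j => j < i) := by simp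
  calc blkSum n i + n i = ∑ j ∈ insert i (Finset.univ.filter (fun j => j < i)), n j := by
        rw [Finset.sum_insert hnot]; exact Nat.add_comm _ _
    _ ≤ blkSum n i' := Finset.sum_le_sum_of_subset hins

lemma sigmaFinEquiv_val : ∀ {m : ℕ} {n : Fin m → ℕ} (x : Σ i : Fin m, Fin (n i)),
    (sigmaFinEquiv x : ℕ) = blkSum n x.1 + (x.2 : ℕ) := by
  intro m
  induction m with
  | zero => exact fun x => x.1.elim0
  | succ m ih =>
    intro n x
    obtain ⟨i, j⟩ := x
    induction i using Fin.cases with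
    | zero =>
      simp [sigmaFinEquiv, sigmaFinFstEquiv, blkSum_zero]
    | succ i =>
      have := ih (n := fun q => n q.succ) ⟨i, j⟩
      simp only [sigmaFinEquiv, sigmaFinFstEquiv, Equiv.trans_apply, Equiv.coe_fn_mk,
        Fin.cases_succ, Equiv.sumCongr_apply, Sum.map_inr, finSumFinEquiv_apply_right,
        finCongr_apply, Fin.coe_cast, Fin.coe_natAdd] at *
      rw [this, blkSum_succ]
      omega

lemma sigmaFinEquiv_lt_iff {m : ℕ} {n : Fin m → ℕ} (x y : Σ i : Fin m, Fin (n i)) :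
    sigmaFinEquiv x < sigmaFinEquiv y ↔
      x.1 < y.1 ∨ (x.1 = y.1 ∧ (x.2 : ℕ) < (y.2 : ℕ)) := by
  rw [Fin.lt_def, sigmaFinEquiv_val, sigmaFinEquiv_val]
  constructor
  · intro h
    rcases lt_trichotomy x.1 y.1 with hlt | heq | hgt
    · exact Or.inl hlt
    · refine Or.inr ⟨heq, ?_⟩
      rw [show blkSum n x.1 = blkSum n y.1 from congrArg _ heq] at h
      omega
    · exfalso
      have := blkSum_add_le n hgt
      have hx2 := y.2.isLt
      omega
  · rintro (hlt | ⟨heq, hval⟩)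
    · have := blkSum_add_le n hlt
      have hx2 := x.2.isLt
      omega
    · rw [show blkSum n x.1 = blkSum n y.1 from congrArg _ heq]
      omega

end AuxSigma

section AuxInflation

lemma inflation_apply_val {m : ℕ} (σ : PermOf m) {n : Fin m → ℕ} (α : ∀ i, PermOf (n i))
    (x : Σ i : Fin m, Fin (n i)) :
    (inflation σ α (sigmaFinEquiv x) : ℕ)
      = blkSum (fun v => n (σ.symm v)) (σ x.1) + (α x.1 x.2 : ℕ) := by
  obtain ⟨i, j⟩ := x
  simp only [inflation, Equiv.trans_apply, Equiv.symm_apply_apply,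
    Equiv.sigmaCongrRight_apply, Equiv.sigmaCongrLeft_apply, finCongr_apply, Fin.coe_cast]
  rw [sigmaFinEquiv_val]
  simp

end AuxInflation

section AuxInflation2

lemma inflation_lt_iff {m : ℕ} (σ : PermOf m) {n : Fin m → ℕ} (α : ∀ i, PermOf (n i))
    (x y : Σ i : Fin m, Fin (n i)) :
    inflation σ α (sigmaFinEquiv x) < inflation σ α (sigmaFinEquiv y) ↔
      σ x.1 < σ y.1 ∨ (x.1 = y.1 ∧ (α x.1 x.2 : ℕ) < (α y.1 y.2 : ℕ)) := by
  rw [Fin.lt_def, inflation_apply_val, inflation_apply_val]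
  have hxb : (α x.1 x.2 : ℕ) < (fun v => n (σ.symm v)) (σ x.1) := by
    simpa using (α x.1 x.2).isLt
  have hyb : (α y.1 y.2 : ℕ) < (fun v => n (σ.symm v)) (σ y.1) := by
    simpa using (α y.1 y.2).isLt
  constructor
  · intro h
    rcases lt_trichotomy (σ x.1) (σ y.1) with hlt | heq | hgt
    · exact Or.inl hlt
    · refine Or.inr ⟨σ.injective heq, ?_⟩
      rw [show blkSum (fun v => n (σ.symm v)) (σ x.1) = blkSum (fun v => n (σ.symm v)) (σ y.1)
        from congrArg _ heq] at h
      omega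
    · exfalso
      have := blkSum_add_le (fun v => n (σ.symm v)) hgt
      beta_reduce at hxb hyb
      omega
  · rintro (hlt | ⟨heq, hval⟩)
    · have := blkSum_add_le (fun v => n (σ.symm v)) hlt
      beta_reduce at hxb hyb
      omega
    · rw [show blkSum (fun v => n (σ.symm v)) (σ x.1) = blkSum (fun v => n (σ.symm v)) (σ y.1)
        from congrArg _ (congrArg σ heq)]
      omega

/-- Monotonicity of inflation with respect to pattern containment. -/
lemma inflation_patt {m₁ m₂ : ℕ} (σ₁ : PermOf m₁) (σ₂ : PermOf m₂)
    {n₁ : Fin m₁ → ℕ} {n₂ : Fin m₂ → ℕ} (α₁ : ∀ i, PermOf (n₁ i)) (α₂ : ∀ i, PermOf (n₂ i))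
    (ι : Fin m₁ → Fin m₂) (hι : StrictMono ι)
    (hσ : ∀ i j, σ₁ i < σ₁ j ↔ σ₂ (ι i) < σ₂ (ι j))
    (g : ∀ i, Fin (n₁ i) ↪o Fin (n₂ (ι i)))
    (hg : ∀ i (a b : Fin (n₁ i)), α₁ i a < α₁ i b ↔ α₂ (ι i) (g i a) < α₂ (ι i) (g i b)) :
    PattContains (inflation σ₁ α₁) (inflation σ₂ α₂) := by
  set F0 : (Σ i : Fin m₁, Fin (n₁ i)) → Σ i : Fin m₂, Fin (n₂ i) :=
    fun x => ⟨ι x.1, g x.1 x.2⟩ with hF0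
  have key : ∀ x y : Σ i : Fin m₁, Fin (n₁ i),
      sigmaFinEquiv x < sigmaFinEquiv y → sigmaFinEquiv (F0 x) < sigmaFinEquiv (F0 y) := by
    rintro ⟨i, a⟩ ⟨i', b⟩ h
    rw [sigmaFinEquiv_lt_iff] at h ⊢
    rcases h with hlt | ⟨heq, hval⟩
    · exact Or.inl (hι hlt)
    · obtain rfl : i = i' := heq
      refine Or.inr ⟨rfl, ?_⟩
      exact Fin.lt_def.1 ((g i).strictMono (Fin.lt_def.2 hval))
  have key2 : ∀ x y : Σ i : Fin m₁, Fin (n₁ i),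
      inflation σ₁ α₁ (sigmaFinEquiv x) < inflation σ₁ α₁ (sigmaFinEquiv y) ↔
        inflation σ₂ α₂ (sigmaFinEquiv (F0 x)) < inflation σ₂ α₂ (sigmaFinEquiv (F0 y)) := by
    rintro ⟨i, a⟩ ⟨i', b⟩
    rw [inflation_lt_iff, inflation_lt_iff]
    constructor
    · rintro (hlt | ⟨heq, hval⟩)
      · exact Or.inl ((hσ i i').1 hlt)
      · obtain rfl : i = i' := heq
        refine Or.inr ⟨rfl, ?_⟩
        exact Fin.lt_def.1 ((hg i a b).1 (Fin.lt_def.2 hval))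
    · rintro (hlt | ⟨heq, hval⟩)
      · exact Or.inl ((hσ i i').2 hlt)
      · obtain rfl : i = i' := hι.injective heq
        refine Or.inr ⟨rfl, ?_⟩
        exact Fin.lt_def.1 ((hg i a b).2 (Fin.lt_def.2 hval))
  set f0 : Fin (∑ i, n₁ i) → Fin (∑ i, n₂ i) :=
    fun z => sigmaFinEquiv (F0 (sigmaFinEquiv.symm z)) with hf0
  have hmono : StrictMono f0 := by
    intro z z' hz
    exact key _ _ (by simpa using hz)
  refine ⟨OrderEmbedding.ofStrictMono f0 hmono, ?_⟩
  intro s t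
  show inflation σ₁ α₁ s < inflation σ₁ α₁ t ↔ inflation σ₂ α₂ (f0 s) < inflation σ₂ α₂ (f0 t)
  have := key2 (sigmaFinEquiv.symm s) (sigmaFinEquiv.symm t)
  simpa using this
end AuxInflation2

section AuxGeom

/-- Position on a subdivided segment: coordinate `c`, orientation `β`, parameter `v ∈ [0,1/2]`. -/
noncomputable def segPos (c : ℕ) (β : Bool) (v : ℝ) : ℝ :=
  (c : ℝ) + (if β then v else 1 - v)

lemma segPos_true (c : ℕ) (v : ℝ) : segPos c true v = (c : ℝ) + v := by simp [segPos]

lemma segPos_false (c : ℕ) (v : ℝ) : segPos c false v = (c : ℝ) + (1 - v) := by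
  simp [segPos]

lemma segPos_mem {c : ℕ} {β : Bool} {v : ℝ} (h0 : 0 ≤ v) (h1 : v ≤ 1/2) :
    (c : ℝ) ≤ segPos c β v ∧ segPos c β v ≤ (c : ℝ) + 1 := by
  cases β
  · rw [segPos_false]; constructor <;> linarith
  · rw [segPos_true]; constructor <;> linarith

/-- Core geometric transfer: coordinates with equal cell data and compatible parameter order
compare the same way. -/
lemma segPos_transfer {c d : ℕ} {β γ : Bool} {v w v' w' : ℝ}
    (hv : 0 ≤ v ∧ v ≤ 1/2) (hw : 0 ≤ w ∧ w ≤ 1/2)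
    (hv' : 0 ≤ v' ∧ v' ≤ 1/2) (hw' : 0 ≤ w' ∧ w' ≤ 1/2)
    (hne : segPos c β v ≠ segPos d γ w) (hne' : segPos c β v' ≠ segPos d γ w')
    (htr : v < w → v' ≤ w') (htr' : w < v → w' ≤ v') :
    segPos c β v < segPos d γ w → segPos c β v' < segPos d γ w' := by
  intro hlt
  rcases lt_trichotomy c d with hcd | hcd | hcd
  · -- different columns
    have h1 := (segPos_mem (c := c) (β := β) hv'.1 hv'.2).2
    have h2 := (segPos_mem (c := d) (β := γ) hw'.1 hw'.2).1
    have hcast : (c : ℝ) + 1 ≤ (d : ℝ) := by exact_mod_cast (hcd : (c : ℕ) + 1 ≤ d)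
    rcases eq_or_lt_of_le (le_trans h1 (le_trans hcast h2)) with heq | h
    · exact absurd heq hne'
    · exact h
  · subst hcd
    cases β <;> cases γ
    · -- both false : reversed order on parameters
      rw [segPos_false, segPos_false] at hlt hne' ⊢
      have hwv : w < v := by linarith
      have hle := htr' hwv
      have hne2 : w' < v' := lt_of_le_of_ne hle (fun h => hne' (by rw [h]))
      linarith
    · -- β = false, γ = true: first point in upper half, contradiction
      exfalso
      rw [segPos_false, segPos_true] at hlt
      have := hv.2; have := hw.2
      linarith
    · -- β = true, γ = false : always
      rw [segPos_true, segPos_false] at hne' ⊢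
      have h3 : v' < 1 - w' := by
        rcases eq_or_lt_of_le (show v' ≤ 1 - w' by linarith [hv'.2, hw'.2]) with heq | h
        · exact absurd (by rw [heq]) hne'
        · exact h
      linarith
    · -- both true
      rw [segPos_true, segPos_true] at hlt hne' ⊢
      have hvw : v < w := by linarith
      have hle := htr hvw
      have hne2 : v' < w' := lt_of_le_of_ne hle (fun h => hne' (by rw [h]))
      linarith
  · -- d < c : hypothesis impossible
    exfalso
    have h1 := (segPos_mem (c := d) (β := γ) hw.1 hw.2).2
    have h2 := (segPos_mem (c := c) (β := β) hv.1 hv.2).1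
    have hcast : (d : ℝ) + 1 ≤ (c : ℝ) := by exact_mod_cast (hcd : (d : ℕ) + 1 ≤ c)
    linarith

end AuxGeom

section AuxWord

/-- Extract an index embedding from a `SublistForall₂` between two `ofFn` lists. -/
lemma sublistForall₂_ofFn {A : Type*} {R : A → A → Prop} {m₁ m₂ : ℕ}
    {f₁ : Fin m₁ → A} {f₂ : Fin m₂ → A}
    (h : List.SublistForall₂ R (List.ofFn f₁) (List.ofFn f₂)) :
    ∃ φ : Fin m₁ → Fin m₂, StrictMono φ ∧ ∀ j, R (f₁ j) (f₂ (φ j)) := by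
  obtain ⟨L, hfor, hsub⟩ := List.sublistForall₂_iff.1 h
  obtain ⟨f, hf⟩ := List.sublist_iff_exists_fin_orderEmbedding_get_eq.1 hsub
  have hlen1 : (List.ofFn f₁).length = m₁ := List.length_ofFn
  have hlenL : L.length = m₁ := hfor.length_eq.symm.trans hlen1
  have hlen2 : (List.ofFn f₂).length = m₂ := List.length_ofFn
  refine ⟨fun j => Fin.cast hlen2 (f (Fin.cast hlenL.symm j)), ?_, ?_⟩
  · intro a b hab
    exact f.strictMono (show Fin.cast hlenL.symm a < Fin.cast hlenL.symm b from hab)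
  · intro j
    have h1 : R ((List.ofFn f₁).get (Fin.cast hlen1.symm j)) (L.get (Fin.cast hlenL.symm j)) := by
      apply hfor.get
    have h2 := hf (Fin.cast hlenL.symm j)
    rw [h2] at h1
    rw [List.get_ofFn, List.get_ofFn] at h1
    exact h1

end AuxWord

section AuxWit

/-- The letter alphabet for a `t × u` grid: a cell with orientation and half-segment data,
together with a block permutation. -/
abbrev GLetter (t u : ℕ) : Type := (Fin t × Fin u × Bool × Bool) × Permutation

/-- The letter order: equal cell data, containment on blocks. -/
def GRel {t u : ℕ} : GLetter t u → GLetter t u → Prop :=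
  fun a b => a.1 = b.1 ∧ PermLe a.2 b.2

lemma gRel_refl {t u : ℕ} (a : GLetter t u) : GRel a a := ⟨rfl, permLe_refl _⟩

lemma gRel_trans {t u : ℕ} {a b c : GLetter t u} (h1 : GRel a b) (h2 : GRel b c) : GRel a c :=
  ⟨h1.1.trans h2.1, permLe_trans h1.2 h2.2⟩

/-- A witness that `π` is an inflation of a permutation drawn on a `t × u` grid figure
by blocks from `U`. -/
structure GWit (t u : ℕ) (U : Set Permutation) (π : Permutation) where
  m : ℕ
  σ : PermOf m
  n : Fin m → ℕ
  α : ∀ i, PermOf (n i)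
  αU : ∀ i, (⟨n i, α i⟩ : Permutation) ∈ U
  heq : π = ⟨∑ i, n i, inflation σ α⟩
  k : Fin m → Fin t
  l : Fin m → Fin u
  s : Fin m → ℝ
  sg : Fin m → Bool
  s0 : ∀ i, 0 ≤ s i
  s1 : ∀ i, s i ≤ 1
  hx : ∀ i j : Fin m, i < j → ((k i : ℕ) : ℝ) + s i < ((k j : ℕ) : ℝ) + s j
  hy : ∀ i j : Fin m, σ i < σ j ↔
    (if sg i then ((l i : ℕ) : ℝ) + s i else ((l i : ℕ) : ℝ) + 1 - s i) <
    (if sg j then ((l j : ℕ) : ℝ) + s j else ((l j : ℕ) : ℝ) + 1 - s j)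

namespace GWit

variable {t u : ℕ} {U : Set Permutation} {π : Permutation} (W : GWit t u U π)

/-- Which half of the segment the point lies in. -/
noncomputable def hlf (i : Fin W.m) : Bool := decide (W.s i ≤ 1/2)

/-- The renormalized parameter of the point. -/
noncomputable def v (i : Fin W.m) : ℝ := if W.s i ≤ 1/2 then W.s i else 1 - W.s i

/-- Whether the point lies in the lower half of its row. -/
noncomputable def low (i : Fin W.m) : Bool := W.sg i == W.hlf i

noncomputable def x (i : Fin W.m) : ℝ := ((W.k i : ℕ) : ℝ) + W.s i

noncomputable def y (i : Fin W.m) : ℝ :=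
  if W.sg i then ((W.l i : ℕ) : ℝ) + W.s i else ((W.l i : ℕ) : ℝ) + 1 - W.s i

lemma v_mem (i : Fin W.m) : 0 ≤ W.v i ∧ W.v i ≤ 1/2 := by
  by_cases h : W.s i ≤ 1/2
  · rw [v, if_pos h]
    exact ⟨W.s0 i, h⟩
  · rw [v, if_neg h]
    push_neg at h
    exact ⟨by linarith [W.s1 i], by linarith⟩

lemma x_eq (i : Fin W.m) : W.x i = segPos ((W.k i : ℕ)) (W.hlf i) (W.v i) := by
  by_cases h : W.s i ≤ 1/2
  · rw [show W.hlf i = true from decide_eq_true h, segPos_true,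
      show W.v i = W.s i from if_pos h]
    rfl
  · rw [show W.hlf i = false from decide_eq_false h, segPos_false,
      show W.v i = 1 - W.s i from if_neg h]
    show ((W.k i : ℕ) : ℝ) + W.s i = _
    ring

lemma y_eq (i : Fin W.m) : W.y i = segPos ((W.l i : ℕ)) (W.low i) (W.v i) := by
  by_cases h : W.s i ≤ 1/2 <;> cases hsg : W.sg i
  · rw [show W.low i = false by
        rw [low, hsg, show W.hlf i = true from decide_eq_true h]; rfl,
      segPos_false, show W.v i = W.s i from if_pos h, y, hsg, if_neg]
    · ring
    · simp
  · rw [show W.low i = true by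
        rw [low, hsg, show W.hlf i = true from decide_eq_true h]; rfl,
      segPos_true, show W.v i = W.s i from if_pos h, y, hsg, if_pos rfl]
  · rw [show W.low i = true by
        rw [low, hsg, show W.hlf i = false from decide_eq_false h]; rfl,
      segPos_true, show W.v i = 1 - W.s i from if_neg h, y, hsg, if_neg]
    · ring
    · simp
  · rw [show W.low i = false by
        rw [low, hsg, show W.hlf i = false from decide_eq_false h]; rfl,
      segPos_false, show W.v i = 1 - W.s i from if_neg h, y, hsg, if_pos rfl]
    ring

lemma x_lt (i j : Fin W.m) (h : i < j) : W.x i < W.x j := W.hx i j h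

lemma y_iff (i j : Fin W.m) : W.σ i < W.σ j ↔ W.y i < W.y j := W.hy i j

lemma x_ne {i j : Fin W.m} (h : i ≠ j) : W.x i ≠ W.x j := by
  rcases lt_or_gt_of_ne h with hlt | hlt
  · exact ne_of_lt (W.x_lt _ _ hlt)
  · exact (ne_of_lt (W.x_lt _ _ hlt)).symm

lemma y_ne {i j : Fin W.m} (h : i ≠ j) : W.y i ≠ W.y j := by
  have : W.σ i ≠ W.σ j := fun hh => h (W.σ.injective hh)
  rcases lt_or_gt_of_ne this with hlt | hlt
  · exact ne_of_lt ((W.y_iff _ _).1 hlt)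
  · exact (ne_of_lt ((W.y_iff _ _).1 hlt)).symm

/-- The letter attached to point `i`. -/
noncomputable def letter (i : Fin W.m) : GLetter t u :=
  ((W.k i, W.l i, W.sg i, W.hlf i), ⟨W.n i, W.α i⟩)

/-- The sorting permutation by parameter. -/
noncomputable def sorter : Equiv.Perm (Fin W.m) := Tuple.sort W.v

/-- The word of the witness: letters in increasing parameter order. -/
noncomputable def word : List (GLetter t u) :=
  List.ofFn (fun j => W.letter (W.sorter j))

lemma word_mem {a : GLetter t u} (ha : a ∈ W.word) : a.2 ∈ U := by
  rw [word, List.mem_ofFn] at ha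
  obtain ⟨j, rfl⟩ := ha
  exact W.αU _

end GWit

end AuxWit

section AuxMain

namespace GWit

variable {t u : ℕ} {U : Set Permutation}

/-- The crucial lemma: a word embedding between witnesses yields pattern containment. -/
lemma permLe_of_word {π₁ π₂ : Permutation} (W₁ : GWit t u U π₁) (W₂ : GWit t u U π₂)
    (h : List.SublistForall₂ GRel W₁.word W₂.word) : PermLe π₁ π₂ := by
  obtain ⟨φ, hφmono, hφ⟩ := sublistForall₂_ofFn h
  set ι : Fin W₁.m → Fin W₂.m := fun i => W₂.sorter (φ (W₁.sorter.symm i)) with hιdef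
  have hιinj : Function.Injective ι := by
    intro a b hab
    apply W₁.sorter.symm.injective
    exact hφmono.injective (W₂.sorter.injective hab)
  have hlet : ∀ i, GRel (W₁.letter i) (W₂.letter (ι i)) := by
    intro i
    have := hφ (W₁.sorter.symm i)
    rwa [Equiv.apply_symm_apply] at this
  have hk : ∀ i, W₂.k (ι i) = W₁.k i := fun i => (congrArg (fun q => q.1) (hlet i).1).symm
  have hl : ∀ i, W₂.l (ι i) = W₁.l i := fun i => (congrArg (fun q => q.2.1) (hlet i).1).symm
  have hsg : ∀ i, W₂.sg (ι i) = W₁.sg i :=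
    fun i => (congrArg (fun q => q.2.2.1) (hlet i).1).symm
  have hhlf : ∀ i, W₂.hlf (ι i) = W₁.hlf i :=
    fun i => (congrArg (fun q => q.2.2.2) (hlet i).1).symm
  have hlow : ∀ i, W₂.low (ι i) = W₁.low i := by
    intro i; rw [low, low, hsg, hhlf]
  have hblk : ∀ i, PermLe (⟨W₁.n i, W₁.α i⟩ : Permutation) ⟨W₂.n (ι i), W₂.α (ι i)⟩ :=
    fun i => (hlet i).2
  -- parameter order transfer
  have hv : ∀ i i', W₁.v i < W₁.v i' → W₂.v (ι i) ≤ W₂.v (ι i') := by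
    intro i i' hvv
    have mono₁ := Tuple.monotone_sort W₁.v
    have mono₂ := Tuple.monotone_sort W₂.v
    have hpos : W₁.sorter.symm i < W₁.sorter.symm i' := by
      by_contra hcon
      push_neg at hcon
      have h2 := mono₁ hcon
      simp only [Function.comp_apply] at h2
      rw [show (Tuple.sort W₁.v) (W₁.sorter.symm i') = i' from W₁.sorter.apply_symm_apply i',
        show (Tuple.sort W₁.v) (W₁.sorter.symm i) = i from W₁.sorter.apply_symm_apply i] at h2
      exact absurd hvv (not_lt.2 h2)
    have h3 := mono₂ (le_of_lt (hφmono hpos))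
    exact h3
  -- coordinate order transfer
  have hxt : ∀ i i', i ≠ i' → W₁.x i < W₁.x i' → W₂.x (ι i) < W₂.x (ι i') := by
    intro i i' hne hxx
    rw [W₂.x_eq, W₂.x_eq, hk, hk, hhlf, hhlf]
    rw [W₁.x_eq, W₁.x_eq] at hxx
    refine segPos_transfer (W₁.v_mem i) (W₁.v_mem i') (W₂.v_mem _) (W₂.v_mem _) ?_ ?_
      (hv i i') (hv i' i) hxx
    · rw [← W₁.x_eq, ← W₁.x_eq]
      exact W₁.x_ne hne
    · rw [← hk i, ← hk i', ← hhlf i, ← hhlf i', ← W₂.x_eq, ← W₂.x_eq]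
      exact W₂.x_ne (fun hc => hne (hιinj hc))
  have hyt : ∀ i i', i ≠ i' → W₁.y i < W₁.y i' → W₂.y (ι i) < W₂.y (ι i') := by
    intro i i' hne hyy
    rw [W₂.y_eq, W₂.y_eq, hl, hl, hlow, hlow]
    rw [W₁.y_eq, W₁.y_eq] at hyy
    refine segPos_transfer (W₁.v_mem i) (W₁.v_mem i') (W₂.v_mem _) (W₂.v_mem _) ?_ ?_
      (hv i i') (hv i' i) hyy
    · rw [← W₁.y_eq, ← W₁.y_eq]
      exact W₁.y_ne hne
    · rw [← hl i, ← hl i', ← hlow i, ← hlow i', ← W₂.y_eq, ← W₂.y_eq]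
      exact W₂.y_ne (fun hc => hne (hιinj hc))
  -- the skeleton embedding
  have hA : StrictMono ι := by
    intro i i' hlt
    have hx2 := hxt i i' (ne_of_lt hlt) (W₁.x_lt _ _ hlt)
    rcases lt_trichotomy (ι i) (ι i') with hh | hh | hh
    · exact hh
    · rw [hh] at hx2
      exact absurd hx2 (lt_irrefl _)
    · exact absurd (W₂.x_lt _ _ hh) (lt_asymm hx2)
  have hB : ∀ i i', W₁.σ i < W₁.σ i' ↔ W₂.σ (ι i) < W₂.σ (ι i') := by
    intro i i'
    rw [W₁.y_iff, W₂.y_iff]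
    rcases eq_or_ne i i' with rfl | hne
    · simp
    constructor
    · exact hyt i i' hne
    · intro hy2
      rcases lt_trichotomy (W₁.y i) (W₁.y i') with hh | hh | hh
      · exact hh
      · exact absurd hh (W₁.y_ne hne)
      · exact absurd (hyt i' i hne.symm hh) (lt_asymm hy2)
  have hblk2 : ∀ i, ∃ g : Fin (W₁.n i) ↪o Fin (W₂.n (ι i)),
      ∀ a b, W₁.α i a < W₁.α i b ↔ W₂.α (ι i) (g a) < W₂.α (ι i) (g b) := hblk
  choose g hg using hblk2
  rw [W₁.heq, W₂.heq]
  exact inflation_patt W₁.σ W₂.σ W₁.α W₂.α ι hA hB g hg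

end GWit

end AuxMain

section AuxExists

/-- Any member of `C[U]` with `C ⊆ Geom(M)` admits a grid-inflation witness. -/
lemma exists_gWit {t u : ℕ} {M : Fin t → Fin u → ℤ} {C U : Set Permutation}
    (hsub : C ⊆ geomGridClass M) {π : Permutation} (hπ : π ∈ classInflate C U) :
    Nonempty (GWit t u U π) := by
  obtain ⟨m, σ, n, α, hσC, hnpos, hαU, heq⟩ := hπ
  obtain ⟨p, hp1, hp2, hp3⟩ := hsub hσC
  choose k l s hs0 hs1 hcase using hp1
  have hpx : ∀ i, (p i).1 = ((k i : ℕ) : ℝ) + s i := by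
    intro i
    rcases hcase i with ⟨-, hpi⟩ | ⟨-, hpi⟩ <;> rw [hpi]
  have hpy : ∀ i, (p i).2 = if decide (M (k i) (l i) = 1)
      then ((l i : ℕ) : ℝ) + s i else ((l i : ℕ) : ℝ) + 1 - s i := by
    intro i
    rcases hcase i with ⟨hM, hpi⟩ | ⟨hM, hpi⟩
    · rw [hpi, if_pos (by rw [decide_eq_true hM])]
    · have hM1 : M (k i) (l i) ≠ 1 := by rw [hM]; decide
      rw [hpi, if_neg (by rw [decide_eq_false hM1]; exact Bool.false_ne_true)]
  refine ⟨⟨m, σ, n, α, hαU, heq, k, l, s, fun i => decide (M (k i) (l i) = 1), hs0, hs1, ?_, ?_⟩⟩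
  · intro i j hij
    have := hp2 i j hij
    rwa [hpx, hpx] at this
  · intro i j
    have := hp3 i j
    rwa [hpy, hpy] at this

instance {t u : ℕ} : IsRefl (GLetter t u) GRel := ⟨gRel_refl⟩

instance {t u : ℕ} : IsTrans (GLetter t u) GRel := ⟨fun _ _ _ => gRel_trans⟩

instance {t u : ℕ} : IsPreorder (GLetter t u) GRel :=
  { refl := gRel_refl, trans := fun _ _ _ => gRel_trans }

lemma gRel_pwo {t u : ℕ} {U : Set Permutation} (hU : IsPwoClass U) :
    ((Set.univ : Set (Fin t × Fin u × Bool × Bool)) ×ˢ U).PartiallyWellOrderedOn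
      (GRel (t := t) (u := u)) := by
  have h1 : (Set.univ : Set (Fin t × Fin u × Bool × Bool)).PartiallyWellOrderedOn Eq :=
    Set.Finite.partiallyWellOrderedOn Set.finite_univ
  exact h1.prod (isPwoClass_pwo hU)

end AuxExists

/-- The inflation of a geometrically griddable class by a partially well-ordered
class is partially well-ordered. -/
theorem classInflate_pwo
    (C U : Set Permutation) (hC : IsPermClass C) (hCg : GeomGriddable C)
    (hU : IsPermClass U) (hUpwo : IsPwoClass U) :
    IsPwoClass (classInflate C U) := by
  obtain ⟨t, u, M, -, hsub⟩ := hCg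
  intro A hA hanti
  by_contra hfin
  have hinf : A.Infinite := hfin
  set e := hinf.natEmbedding with he
  have hW : ∀ N : ℕ, Nonempty (GWit t u U ((e N : Permutation))) :=
    fun N => exists_gWit hsub (hA (e N).2)
  have W : ∀ N : ℕ, GWit t u U ((e N : Permutation)) := fun N => (hW N).some
  have hHig := Set.PartiallyWellOrderedOn.partiallyWellOrderedOn_sublistForall₂
    (GRel (t := t) (u := u)) (gRel_pwo hUpwo)
  obtain ⟨N₁, N₂, hlt, hrel⟩ := hHig.exists_lt (f := fun N => (W N).word)
    (fun N => by
      intro x hx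
      exact Set.mem_prod.2 ⟨Set.mem_univ _, (W N).word_mem hx⟩)
  have hle := GWit.permLe_of_word (W N₁) (W N₂) hrel
  have hne : (e N₁ : Permutation) ≠ (e N₂ : Permutation) := by
    intro hcon
    exact (Nat.ne_of_lt hlt) (e.injective (Subtype.ext hcon))
  exact hanti _ (e N₁).2 _ (e N₂).2 hne hle
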